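/- Let α > 0 and let M₁, M₂ be invertible. The unit ball B₁^{α,M} = {(x,t) ∈ ℝ^q × ℝ^m : N_{α,M}(x,t) ≤ 1} is a convex subset of ℝ^{q+m} (with respect to the usual linear structure) if and only if α ≥ 2. -/

import Mathlib

open MeasureTheory Matrix

/-- Euclidean norm of a vector in `Fin n → ℝ`. -/
noncomputable def eNorm {n : ℕ} (v : Fin n → ℝ) : ℝ := Real.sqrt (∑ i, v i ^ 2)

/-- The homogeneous norm `N_{α,M}(x,t) = (|M₁x|^α + |M₂t|^{α/2})^{1/α}`. -/
noncomputable def homNorm {q m : ℕ} (α : ℝ) (M₁ : Matrix (Fin q) (Fin q) ℝ)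
    (M₂ : Matrix (Fin m) (Fin m) ℝ) (p : (Fin q → ℝ) × (Fin m → ℝ)) : ℝ :=
  (eNorm (M₁.mulVec p.1) ^ α + eNorm (M₂.mulVec p.2) ^ (α / 2)) ^ (1 / α)

/-- The ball `B_R^{α,M}`. -/
noncomputable def homBall {q m : ℕ} (α : ℝ) (M₁ : Matrix (Fin q) (Fin q) ℝ)
    (M₂ : Matrix (Fin m) (Fin m) ℝ) (R : ℝ) : Set ((Fin q → ℝ) × (Fin m → ℝ)) :=
  {p | homNorm α M₁ M₂ p ≤ R}

lemma eNorm_eq_norm {n : ℕ} (v : Fin n → ℝ) :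
    eNorm v = ‖(WithLp.equiv 2 (Fin n → ℝ)).symm v‖ := by
  rw [EuclideanSpace.norm_eq, eNorm]
  congr 1
  refine Finset.sum_congr rfl fun i _ => ?_
  rw [WithLp.equiv_symm_apply, WithLp.ofLp_toLp, Real.norm_eq_abs, sq_abs]

lemma eNorm_nonneg {n : ℕ} (v : Fin n → ℝ) : 0 ≤ eNorm v := Real.sqrt_nonneg _

lemma eNorm_add_le {n : ℕ} (v w : Fin n → ℝ) : eNorm (v + w) ≤ eNorm v + eNorm w := by
  simp only [eNorm_eq_norm, map_add]
  exact norm_add_le _ _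

lemma eNorm_smul {n : ℕ} (c : ℝ) (v : Fin n → ℝ) : eNorm (c • v) = |c| * eNorm v := by
  rw [eNorm_eq_norm, eNorm_eq_norm, WithLp.equiv_symm_apply, WithLp.toLp_smul, norm_smul, Real.norm_eq_abs]

lemma eNorm_single {n : ℕ} [NeZero n] : eNorm (Pi.single (0 : Fin n) (1:ℝ)) = 1 := by
  have h : ∑ i : Fin n, (Pi.single (0 : Fin n) (1:ℝ) : Fin n → ℝ) i ^ 2 = 1 := by
    rw [Finset.sum_eq_single 0] <;> simp +contextual [Pi.single_apply]
  rw [eNorm, h, Real.sqrt_one]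

lemma eNorm_zero {n : ℕ} : eNorm (0 : Fin n → ℝ) = 0 := by simp [eNorm]

lemma mem_homBall_iff {q m : ℕ} {α : ℝ} (hα : 0 < α) (M₁ : Matrix (Fin q) (Fin q) ℝ)
    (M₂ : Matrix (Fin m) (Fin m) ℝ) (p : (Fin q → ℝ) × (Fin m → ℝ)) :
    p ∈ homBall α M₁ M₂ 1 ↔
      eNorm (M₁.mulVec p.1) ^ α + eNorm (M₂.mulVec p.2) ^ (α / 2) ≤ 1 := by
  set S := eNorm (M₁.mulVec p.1) ^ α + eNorm (M₂.mulVec p.2) ^ (α / 2) with hSdef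
  have hS : 0 ≤ S :=
    add_nonneg (Real.rpow_nonneg (eNorm_nonneg _) _) (Real.rpow_nonneg (eNorm_nonneg _) _)
  have hmem : p ∈ homBall α M₁ M₂ 1 ↔ S ^ (1/α) ≤ 1 := Iff.rfl
  rw [hmem]
  constructor
  · intro h
    have h2 : (S ^ (1/α)) ^ α ≤ 1 ^ α :=
      Real.rpow_le_rpow (Real.rpow_nonneg hS _) h hα.le
    rwa [← Real.rpow_mul hS, one_div_mul_cancel hα.ne', Real.rpow_one, Real.one_rpow] at h2
  · intro h
    have h2 : S ^ (1/α) ≤ 1 ^ (1/α) := Real.rpow_le_rpow hS h (by positivity)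
    rwa [Real.one_rpow] at h2

theorem homBall_convex_iff {q m : ℕ} (hq : 2 ≤ q) (hm : 1 ≤ m)
    (M₁ : Matrix (Fin q) (Fin q) ℝ) (M₂ : Matrix (Fin m) (Fin m) ℝ)
    (hM₁ : IsUnit M₁.det) (hM₂ : IsUnit M₂.det) (α : ℝ) (hα : 0 < α) :
    Convex ℝ (homBall α M₁ M₂ 1) ↔ 2 ≤ α := by
  haveI : NeZero q := ⟨by omega⟩
  haveI : NeZero m := ⟨by omega⟩
  constructor
  · -- convex → 2 ≤ α
    intro hc
    by_contra hlt
    push_neg at hlt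
    set x₀ : Fin q → ℝ := M₁⁻¹.mulVec (Pi.single 0 1) with hx₀def
    set t₀ : Fin m → ℝ := M₂⁻¹.mulVec (Pi.single 0 1) with ht₀def
    have hx₀ : M₁.mulVec x₀ = Pi.single 0 1 := by
      rw [hx₀def, Matrix.mulVec_mulVec, Matrix.mul_nonsing_inv _ hM₁, Matrix.one_mulVec]
    have ht₀ : M₂.mulVec t₀ = Pi.single 0 1 := by
      rw [ht₀def, Matrix.mulVec_mulVec, Matrix.mul_nonsing_inv _ hM₂, Matrix.one_mulVec]
    have hmem : ∀ r s : ℝ, (r • x₀, s • t₀) ∈ homBall α M₁ M₂ 1 ↔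
        |r| ^ α + |s| ^ (α/2) ≤ 1 := by
      intro r s
      rw [mem_homBall_iff hα]
      simp only [Matrix.mulVec_smul, hx₀, ht₀, eNorm_smul, eNorm_single, mul_one]
    -- inductively: points are in the ball
    have claim : ∀ n : ℕ, ((1 - (2:ℝ)⁻¹ ^ n) • x₀, ((2:ℝ)⁻¹ ^ n) • t₀) ∈ homBall α M₁ M₂ 1 := by
      intro n
      induction n with
      | zero =>
        rw [pow_zero, hmem]
        simp [Real.zero_rpow hα.ne', Real.one_rpow]
      | succ n ih =>
        have h1 : ((1:ℝ) • x₀, (0:ℝ) • t₀) ∈ homBall α M₁ M₂ 1 := by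
          rw [hmem]
          simp [Real.zero_rpow (by positivity : α/2 ≠ 0), Real.one_rpow]
        have key := hc ih h1 (by norm_num : (0:ℝ) ≤ 1/2) (by norm_num : (0:ℝ) ≤ 1/2)
          (by norm_num : (1:ℝ)/2 + 1/2 = 1)
        convert key using 1
        have hp : (2:ℝ)⁻¹ ^ (n+1) = (2:ℝ)⁻¹ ^ n * (1/2) := by
          rw [pow_succ]; norm_num
        refine Prod.ext ?_ ?_ <;> simp only [Prod.smul_mk, Prod.mk_add_mk, Prod.fst, Prod.snd,
          smul_smul, ← add_smul, hp]
        · congr 1; ring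
        · congr 1; ring
    -- extract numerical inequality
    have hineq : ∀ n : ℕ, (1 - (2:ℝ)⁻¹ ^ n) ^ α + ((2:ℝ)⁻¹ ^ n) ^ (α/2) ≤ 1 := by
      intro n
      have h := (hmem _ _).mp (claim n)
      have h1 : (0:ℝ) ≤ 1 - (2:ℝ)⁻¹ ^ n := by
        have : (2:ℝ)⁻¹ ^ n ≤ 1 := pow_le_one₀ (by norm_num) (by norm_num)
        linarith
      have h2 : (0:ℝ) ≤ (2:ℝ)⁻¹ ^ n := by positivity
      rwa [abs_of_nonneg h1, abs_of_nonneg h2] at h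
    -- bound : 1 - c δ ≤ (1-δ)^α for 0 < δ ≤ 1/2, c = max α 1
    set c : ℝ := max α 1 with hcdef
    have hc1 : 1 ≤ c := le_max_right _ _
    have hc0 : 0 < c := lt_of_lt_of_le one_pos hc1
    have hbound : ∀ δ : ℝ, 0 < δ → δ ≤ 1/2 → 1 - c * δ ≤ (1 - δ) ^ α := by
      intro δ hδ0 hδ1
      rcases le_or_gt 1 α with h1α | h1α
      · have hb := one_add_mul_self_le_rpow_one_add (s := -δ) (by linarith) h1α
        have : 1 - α * δ ≤ (1 - δ) ^ α := by
          rw [show (1:ℝ) + -δ = 1 - δ by ring] at hb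
          nlinarith
        have hca : α ≤ c := le_max_left _ _
        nlinarith
      · have hpos : (0:ℝ) < 1 - δ := by linarith
        have hb : (1 - δ) ^ (1:ℝ) ≤ (1 - δ) ^ α :=
          Real.rpow_le_rpow_of_exponent_ge hpos (by linarith) h1α.le
        rw [Real.rpow_one] at hb
        nlinarith
    -- combine : for all n ≥ 1, (2⁻¹^n)^(α/2) ≤ c * 2⁻¹^n
    have hmain : ∀ n : ℕ, 1 ≤ n → ((2:ℝ)⁻¹ ^ n) ^ (α/2) ≤ c * (2:ℝ)⁻¹ ^ n := by
      intro n hn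
      set δ : ℝ := (2:ℝ)⁻¹ ^ n with hδdef
      have hδ0 : 0 < δ := by positivity
      have hδ1 : δ ≤ 1/2 := by
        calc δ ≤ (2:ℝ)⁻¹ ^ 1 := pow_le_pow_of_le_one (by norm_num) (by norm_num) hn
        _ = 1/2 := by norm_num
      have h := hineq n
      rw [← hδdef] at h
      have hb := hbound δ hδ0 hδ1
      linarith
    -- contradiction
    set β : ℝ := 1 - α/2 with hβdef
    have hβ0 : 0 < β := by rw [hβdef]; linarith
    obtain ⟨n, hn⟩ := exists_nat_gt (Real.logb 2 c / β)
    set N : ℕ := n + 1 with hNdef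
    have hNgt : Real.logb 2 c / β < (N:ℝ) := by
      have : (n:ℝ) ≤ (N:ℝ) := by exact_mod_cast Nat.le_succ n
      linarith
    have hNβ : Real.logb 2 c < (N:ℝ) * β := by
      rw [div_lt_iff₀ hβ0] at hNgt; linarith
    have hclt : c < (2:ℝ) ^ ((N:ℝ) * β) := by
      calc c = (2:ℝ) ^ (Real.logb 2 c) := (Real.rpow_logb (by norm_num) (by norm_num) hc0).symm
      _ < (2:ℝ) ^ ((N:ℝ) * β) := by
          exact Real.rpow_lt_rpow_of_exponent_lt (by norm_num) hNβ
    -- but hmain gives 2^(Nβ) ≤ c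
    have hm2 := hmain N (by omega)
    have e1 : ((2:ℝ)⁻¹ ^ N) = (2:ℝ) ^ (-(N:ℝ)) := by
      rw [← Real.rpow_natCast ((2:ℝ)⁻¹) N, Real.inv_rpow (by norm_num : (0:ℝ) ≤ 2),
        ← Real.rpow_neg (by norm_num)]
    have e2 : ((2:ℝ)⁻¹ ^ N) ^ (α/2) = (2:ℝ) ^ (-(N:ℝ) * (α/2)) := by
      rw [e1, ← Real.rpow_mul (by norm_num)]
    rw [e2, e1] at hm2
    -- hm2 : 2^(-N * (α/2)) ≤ c * 2^(-N)
    have hfin : (2:ℝ) ^ ((N:ℝ) * β) ≤ c := by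
      have hpos1 : (0:ℝ) < (2:ℝ) ^ (-(N:ℝ)) := Real.rpow_pos_of_pos (by norm_num) _
      have key : (2:ℝ) ^ ((N:ℝ) * β) = (2:ℝ) ^ (-(N:ℝ) * (α/2)) / (2:ℝ) ^ (-(N:ℝ)) := by
        rw [← Real.rpow_sub (by norm_num)]
        congr 1
        rw [hβdef]; ring
      rw [key, div_le_iff₀ hpos1]
      linarith [hm2, hpos1]
    linarith
  · -- 2 ≤ α → convex
    intro hα2
    intro p hp r hr a b ha hb hab
    rw [mem_homBall_iff hα] at hp hr ⊢
    have hstep : ∀ (k : ℕ) (M : Matrix (Fin k) (Fin k) ℝ) (u v : Fin k → ℝ) (e : ℝ), 1 ≤ e →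
        eNorm (M.mulVec (a • u + b • v)) ^ e ≤
          a * eNorm (M.mulVec u) ^ e + b * eNorm (M.mulVec v) ^ e := by
      intro k M u v e he
      have htri : eNorm (M.mulVec (a • u + b • v)) ≤
          a * eNorm (M.mulVec u) + b * eNorm (M.mulVec v) := by
        calc eNorm (M.mulVec (a • u + b • v))
            = eNorm (a • M.mulVec u + b • M.mulVec v) := by
              rw [Matrix.mulVec_add, Matrix.mulVec_smul, Matrix.mulVec_smul]
        _ ≤ eNorm (a • M.mulVec u) + eNorm (b • M.mulVec v) := eNorm_add_le _ _
        _ = a * eNorm (M.mulVec u) + b * eNorm (M.mulVec v) := by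
              rw [eNorm_smul, eNorm_smul, abs_of_nonneg ha, abs_of_nonneg hb]
      have h1 : eNorm (M.mulVec (a • u + b • v)) ^ e ≤
          (a * eNorm (M.mulVec u) + b * eNorm (M.mulVec v)) ^ e :=
        Real.rpow_le_rpow (eNorm_nonneg _) htri (by linarith)
      have h2 := (convexOn_rpow he).2 (Set.mem_Ici.mpr (eNorm_nonneg (M.mulVec u)))
        (Set.mem_Ici.mpr (eNorm_nonneg (M.mulVec v))) ha hb hab
      simp only [smul_eq_mul] at h2
      exact le_trans h1 h2
    have t1 := hstep q M₁ p.1 r.1 α (by linarith)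
    have t2 := hstep m M₂ p.2 r.2 (α/2) (by linarith)
    have hfst : (a • p + b • r).1 = a • p.1 + b • r.1 := rfl
    have hsnd : (a • p + b • r).2 = a • p.2 + b • r.2 := rfl
    rw [hfst, hsnd]
    nlinarith [t1, t2, hp, hr, ha, hb]
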